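/- Let (X,b,m) be a connected, locally finite, countably infinite weighted graph, fix x₀∈X, and suppose that ∑_{r=1}^∞ 1/D_-(r) = ∞, where D_-(r) = max_{x∈S_r} Deg_-(x). Then for every λ<0 there exists a function v : X→(0,∞) which vanishes at infinity and satisfies 𝓛v(x) ≥ λ·v(x) for every x∈X. (By the elliptic characterization of the Feller property, this means the graph satisfies the Feller property.) -/

import Mathlib

/-- A function on a countable set vanishes at infinity if, for every `ε > 0`,
the set where `|f| ≥ ε` is finite. -/
def VanishesAtInfty {V : Type*} (f : V → ℝ) : Prop :=
  ∀ ε > (0 : ℝ), {x | ε ≤ |f x|}.Finite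

/-- `(X, b, m)` is a weighted graph: nonnegative symmetric edge weight with vanishing
diagonal, locally finite, positive measure, connected. -/
def IsWeightedGraph {V : Type*} (b : V → V → ℝ) (m : V → ℝ) : Prop :=
  (∀ x y, 0 ≤ b x y) ∧ (∀ x y, b x y = b y x) ∧ (∀ x, b x x = 0) ∧
    (∀ x, {y | 0 < b x y}.Finite) ∧ (∀ x, 0 < m x) ∧
    (∀ x y, Relation.ReflTransGen (fun a c => 0 < b a c) x y)

/-- The formal graph Laplacian `𝓛f(x) = (1/m x) ∑_y b x y (f x − f y)`. -/
noncomputable def lap {V : Type*} (b : V → V → ℝ) (m : V → ℝ) (f : V → ℝ) (x : V) : ℝ :=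
  (1 / m x) * ∑' y, b x y * (f x - f y)

/-- The weighted degree `Deg(x) = (1/m x) ∑_y b x y`. -/
noncomputable def deg {V : Type*} (b : V → V → ℝ) (m : V → ℝ) (x : V) : ℝ :=
  (1 / m x) * ∑' y, b x y

/-- The combinatorial graph metric: the least length of a path of edges joining `x` to `y`. -/
noncomputable def graphDist {V : Type*} (b : V → V → ℝ) (x y : V) : ℕ :=
  sInf {n | ∃ f : ℕ → V, f 0 = x ∧ f n = y ∧ ∀ i < n, 0 < b (f i) (f (i + 1))}

/-- The sphere `S_r = {x | d(x,x₀) = r}` around `x₀`. -/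
def sphere' {V : Type*} (b : V → V → ℝ) (x₀ : V) (r : ℕ) : Set V :=
  {x | graphDist b x₀ x = r}

/-- The inner degree `Deg_-(x) = (1/m x) ∑_{y ∈ S_{d(x₀,x)−1}} b x y` of a vertex `x`
(with respect to the centre `x₀`). -/
noncomputable def degMinus {V : Type*} (b : V → V → ℝ) (m : V → ℝ) (x₀ : V) (x : V) : ℝ :=
  (1 / m x) * ∑' y, (if graphDist b x₀ y + 1 = graphDist b x₀ x then b x y else 0)

section GraphAux
variable {V : Type*} (b : V → V → ℝ) (x₀ : V)

/-- The set of lengths of paths from `x₀` to `x`. -/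
def pathLens (x : V) : Set ℕ :=
  {n | ∃ f : ℕ → V, f 0 = x₀ ∧ f n = x ∧ ∀ i < n, 0 < b (f i) (f (i + 1))}

lemma graphDist_eq (x : V) : graphDist b x₀ x = sInf (pathLens b x₀ x) := rfl

lemma pathLens_extend {y z : V} {n : ℕ} (hn : n ∈ pathLens b x₀ y) (h : 0 < b y z) :
    n + 1 ∈ pathLens b x₀ z := by
  obtain ⟨f, h0, hn, hp⟩ := hn
  refine ⟨fun i => if i ≤ n then f i else z, by simp [h0], by simp, ?_⟩
  intro i hi
  rcases lt_or_eq_of_le (Nat.lt_succ_iff.mp hi) with hi' | hi'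
  · simpa [Nat.le_of_lt hi', Nat.succ_le_of_lt hi'] using hp i hi'
  · subst hi'; simpa [hn] using h

lemma pathLens_nonempty (hconn : ∀ x y, Relation.ReflTransGen (fun a c => 0 < b a c) x y)
    (x : V) : (pathLens b x₀ x).Nonempty := by
  have h := hconn x₀ x
  induction h with
  | refl => exact ⟨0, fun _ => x₀, rfl, rfl, by omega⟩
  | tail _ hedge ih =>
    obtain ⟨n, hn⟩ := ih
    exact ⟨n + 1, pathLens_extend b x₀ hn hedge⟩

lemma graphDist_mem (hconn : ∀ x y, Relation.ReflTransGen (fun a c => 0 < b a c) x y)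
    (x : V) : graphDist b x₀ x ∈ pathLens b x₀ x :=
  Nat.sInf_mem (pathLens_nonempty b x₀ hconn x)

lemma graphDist_le_succ (hconn : ∀ x y, Relation.ReflTransGen (fun a c => 0 < b a c) x y)
    {y z : V} (h : 0 < b y z) : graphDist b x₀ z ≤ graphDist b x₀ y + 1 :=
  Nat.sInf_le (pathLens_extend b x₀ (graphDist_mem b x₀ hconn y) h)

lemma eq_of_graphDist_zero (hconn : ∀ x y, Relation.ReflTransGen (fun a c => 0 < b a c) x y)
    {x : V} (h : graphDist b x₀ x = 0) : x = x₀ := by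
  have := graphDist_mem b x₀ hconn x
  rw [h] at this
  obtain ⟨f, h0, hn, -⟩ := this
  rw [← hn, h0]
lemma graphDist_self : graphDist b x₀ x₀ = 0 :=
  Nat.eq_zero_of_le_zero (Nat.sInf_le ⟨fun _ => x₀, rfl, rfl, by omega⟩)

lemma exists_inner (hsym : ∀ x y, b x y = b y x)
    (hconn : ∀ x y, Relation.ReflTransGen (fun a c => 0 < b a c) x y)
    {x : V} {r : ℕ} (h : graphDist b x₀ x = r + 1) :
    ∃ y, 0 < b x y ∧ graphDist b x₀ y + 1 = graphDist b x₀ x := by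
  have hmem := graphDist_mem b x₀ hconn x
  rw [h] at hmem
  obtain ⟨f, h0, hn, hp⟩ := hmem
  refine ⟨f r, ?_, ?_⟩
  · rw [hsym]; simpa [hn] using hp r (Nat.lt_succ_self r)
  · have hle : graphDist b x₀ (f r) ≤ r :=
      Nat.sInf_le ⟨f, h0, rfl, fun i hi => hp i (by omega)⟩
    have hedge : 0 < b (f r) x := by simpa [hn] using hp r (Nat.lt_succ_self r)
    have hge := graphDist_le_succ b x₀ hconn hedge
    omega

lemma ball_finite (hlf : ∀ x, {y | 0 < b x y}.Finite)
    (hconn : ∀ x y, Relation.ReflTransGen (fun a c => 0 < b a c) x y)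
    (R : ℕ) : {x | graphDist b x₀ x ≤ R}.Finite := by
  induction R with
  | zero =>
    refine Set.Finite.subset (Set.finite_singleton x₀) ?_
    intro x hx
    exact eq_of_graphDist_zero b x₀ hconn (Nat.le_zero.mp hx)
  | succ R ih =>
    refine Set.Finite.subset (ih.union (ih.biUnion fun y _ => hlf y)) ?_
    intro x hx
    rcases Nat.lt_succ_iff_lt_or_eq.mp (Nat.lt_succ_of_le hx) with h | h
    · exact Or.inl (Nat.lt_succ_iff.mp h)
    · right
      have hmem := graphDist_mem b x₀ hconn x
      rw [h] at hmem
      obtain ⟨f, h0, hn, hp⟩ := hmem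
      have h1 : graphDist b x₀ (f R) ≤ R :=
        Nat.sInf_le ⟨f, h0, rfl, fun i hi => hp i (by omega)⟩
      have h2 : 0 < b (f R) x := by simpa [hn] using hp R (Nat.lt_succ_self R)
      exact Set.mem_biUnion h1 h2

end GraphAux
open Filter in
lemma min_not_summable {g : ℕ → ℝ} (hg : ∀ k, 0 < g k) (hns : ¬ Summable g) :
    ¬ Summable (fun k => min (g k) 1) := by
  intro hs
  have h0 := hs.tendsto_atTop_zero
  have hev : ∀ᶠ k in atTop, min (g k) 1 < 1 := h0.eventually (gt_mem_nhds one_pos)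
  obtain ⟨N, hN⟩ := eventually_atTop.mp hev
  apply hns
  rw [← summable_nat_add_iff N]
  have : Summable fun k => min (g (k + N)) 1 := (summable_nat_add_iff N).mpr hs
  refine this.congr fun k => ?_
  have := hN (k + N) (Nat.le_add_left N k)
  rcases min_cases (g (k + N)) 1 with ⟨h1, h2⟩ | ⟨h1, h2⟩
  · exact h1
  · rw [h1] at this; exact absurd this (lt_irrefl 1)

open Filter in
lemma log_one_add_lb {t : ℝ} (ht : 0 < t) : min t 1 / 2 ≤ Real.log (1 + t) := by
  have h1 : (0:ℝ) < 1 + t := by linarith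
  have hlog : 1 - (1 + t)⁻¹ ≤ Real.log (1 + t) := by
    have := Real.log_le_sub_one_of_pos (x := (1 + t)⁻¹) (by positivity)
    rw [Real.log_inv] at this
    linarith
  rcases le_or_gt t 1 with h | h
  · have hmin : min t 1 = t := min_eq_left h
    rw [hmin]
    have : t / 2 ≤ 1 - (1 + t)⁻¹ := by
      rw [div_le_iff₀ (by norm_num : (0:ℝ) < 2)] at *
      have : (1 + t)⁻¹ ≤ 1 - t / 2 := by
        rw [inv_le_iff_one_le_mul₀ h1]
        nlinarith
      linarith [this]
    linarith
  · have hmin : min t 1 = 1 := min_eq_right h.le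
    rw [hmin]
    have h2 : Real.log 2 ≤ Real.log (1 + t) :=
      Real.log_le_log (by norm_num) (by linarith)
    have := Real.log_two_gt_d9
    linarith

open Filter Finset in
lemma inv_prod_tendsto {g : ℕ → ℝ} (hg : ∀ k, 0 < g k) (hns : ¬ Summable g) :
    Tendsto (fun r => (∏ k ∈ range r, (1 + g k))⁻¹) atTop (nhds 0) := by
  have hlogpos : ∀ k, 0 ≤ Real.log (1 + g k) := fun k =>
    Real.log_nonneg (by linarith [hg k])
  have hlogns : ¬ Summable (fun k => Real.log (1 + g k)) := by
    intro hs
    apply min_not_summable hg hns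
    have h2 : Summable (fun k => min (g k) 1 / 2) :=
      hs.of_nonneg_of_le (fun k => by have := hg k; have : (0:ℝ) ≤ min (g k) 1 := le_min (hg k).le one_pos.le; linarith)
        (fun k => log_one_add_lb (hg k))
    have := h2.mul_left 2
    refine this.congr fun k => by ring
  have hS : Tendsto (fun r => ∑ k ∈ range r, Real.log (1 + g k)) atTop atTop :=
    (not_summable_iff_tendsto_nat_atTop_of_nonneg hlogpos).mp hlogns
  have hApos : ∀ r, (0:ℝ) < ∏ k ∈ range r, (1 + g k) := fun r =>
    prod_pos fun k _ => by linarith [hg k]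
  have hA : Tendsto (fun r => ∏ k ∈ range r, (1 + g k)) atTop atTop := by
    have : (fun r => ∏ k ∈ range r, (1 + g k)) =
        fun r => Real.exp (∑ k ∈ range r, Real.log (1 + g k)) := by
      funext r
      rw [← Real.log_prod (fun k _ => by have := hg k; intro h; linarith [h]), Real.exp_log (hApos r)]
    rw [this]
    exact Real.tendsto_exp_atTop.comp hS
  exact tendsto_inv_atTop_zero.comp hA
open Filter Finset


/-- Theorem (Feller property via inner degree growth): if `D_-(r) = max_{x ∈ S_r} Deg_-(x)`
satisfies `∑_{r≥1} 1/D_-(r) = ∞`, then for every `λ < 0` there is a positive function `v`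
vanishing at infinity with `𝓛v ≥ λ·v`; i.e. the graph satisfies the Feller property. -/
theorem stmt1 {V : Type*} [Countable V] [Infinite V]
    (b : V → V → ℝ) (m : V → ℝ) (hwg : IsWeightedGraph b m) (x₀ : V)
    (D : ℕ → ℝ)
    (hD : ∀ r : ℕ, 1 ≤ r →
      IsGreatest (degMinus b m x₀ '' sphere' b x₀ r) (D r))
    (hdiv : ¬ Summable (fun r : ℕ => 1 / D (r + 1))) :
    ∀ lam : ℝ, lam < 0 → ∃ v : V → ℝ,
      (∀ x, 0 < v x) ∧ VanishesAtInfty v ∧ ∀ x, lam * v x ≤ lap b m v x := by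
  obtain ⟨hb0, hsym, hdiag, hlf, hm, hconn⟩ := hwg
  intro lam hlam
  have hc : (0:ℝ) < -lam := by linarith
  -- tsum over finite support
  have hsupp : ∀ (x : V) (F : V → ℝ), (∀ y, b x y = 0 → F y = 0) →
      ∑' y, F y = ∑ y ∈ (hlf x).toFinset, F y := by
    intro x F hF
    refine tsum_eq_sum fun y hy => hF y ?_
    have h1 : ¬ 0 < b x y := by simpa [Set.Finite.mem_toFinset] using hy
    exact le_antisymm (not_lt.mp h1) (hb0 x y)
  -- degMinus as a finite sum
  have hdegM : ∀ x : V, degMinus b m x₀ x = (1 / m x) *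
      ∑ y ∈ (hlf x).toFinset,
        (if graphDist b x₀ y + 1 = graphDist b x₀ x then b x y else 0) := by
    intro x
    unfold degMinus
    rw [hsupp x _ (fun y hb => by simp [hb])]
  -- positivity of D
  have hDpos : ∀ r : ℕ, 0 < D (r + 1) := by
    intro r
    obtain ⟨x, hx, hxD⟩ := (hD (r + 1) (by omega)).1
    obtain ⟨y, hby, hdy⟩ := exists_inner b x₀ hsym hconn hx
    rw [← hxD, hdegM]
    refine mul_pos (div_pos one_pos (hm x)) ?_
    refine Finset.sum_pos' (fun z _ => by split <;> simp [hb0 x z]) ?_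
    refine ⟨y, (hlf x).mem_toFinset.mpr hby, ?_⟩
    rw [if_pos hdy]
    exact hby
  -- the sequence
  set g : ℕ → ℝ := fun k => (-lam) / D (k + 1) with hgdef
  have hgpos : ∀ k, 0 < g k := fun k => div_pos hc (hDpos k)
  have hgns : ¬ Summable g := by
    intro hs
    apply hdiv
    have h2 := hs.mul_left (-lam)⁻¹
    refine h2.congr fun k => ?_
    have : D (k + 1) ≠ 0 := (hDpos k).ne'
    simp only [hgdef]
    field_simp [hlam.ne]
  set A : ℕ → ℝ := fun r => ∏ k ∈ range r, (1 + g k) with hAdef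
  set a : ℕ → ℝ := fun r => (A r)⁻¹ with hadef
  have hApos : ∀ r, 0 < A r := fun r => prod_pos fun k _ => by linarith [hgpos k]
  have hapos : ∀ r, 0 < a r := fun r => inv_pos.mpr (hApos r)
  have hAmono : Monotone A := by
    refine monotone_nat_of_le_succ fun r => ?_
    have : A (r + 1) = A r * (1 + g r) := Finset.prod_range_succ _ _
    rw [this]
    exact le_mul_of_one_le_right (hApos r).le (by linarith [hgpos r])
  have haanti : Antitone a := fun i j hij =>
    inv_anti₀ (hApos i) (hAmono hij)
  have hrec : ∀ r, a r = a (r + 1) * (1 + g r) := by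
    intro r
    have h1 : (0:ℝ) < 1 + g r := by linarith [hgpos r]
    show (A r)⁻¹ = (A (r + 1))⁻¹ * (1 + g r)
    rw [show A (r + 1) = A r * (1 + g r) from Finset.prod_range_succ _ _, mul_inv,
      mul_assoc, inv_mul_cancel₀ h1.ne', mul_one]
  have hkey : ∀ r, a r - a (r + 1) = a (r + 1) * g r := by
    intro r; rw [hrec r]; ring
  have hlim : Tendsto a atTop (nhds 0) := inv_prod_tendsto hgpos hgns
  -- the function
  refine ⟨fun x => a (graphDist b x₀ x), fun x => hapos _, ?_, ?_⟩
  · -- vanishes at infinity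
    intro ε hε
    obtain ⟨R, hR⟩ := eventually_atTop.mp (hlim.eventually (gt_mem_nhds hε))
    refine Set.Finite.subset (ball_finite b x₀ hlf hconn R) ?_
    intro x hx
    simp only [Set.mem_setOf_eq] at hx ⊢
    rw [abs_of_pos (hapos _)] at hx
    by_contra h
    have := hR (graphDist b x₀ x) (by omega)
    linarith
  · -- the inequality
    intro x
    show lam * a (graphDist b x₀ x) ≤ lap b m (fun x => a (graphDist b x₀ x)) x
    have hlap : lap b m (fun x => a (graphDist b x₀ x)) x = (1 / m x) *
        ∑ y ∈ (hlf x).toFinset,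
          b x y * (a (graphDist b x₀ x) - a (graphDist b x₀ y)) := by
      unfold lap
      rw [hsupp x _ (fun y hb => by rw [hb]; ring)]
    rcases hr : graphDist b x₀ x with _ | r
    · -- distance 0
      have hpos : 0 ≤ (1 / m x) *
          ∑ y ∈ (hlf x).toFinset,
            b x y * (a (graphDist b x₀ x) - a (graphDist b x₀ y)) := by
        refine mul_nonneg (div_nonneg one_pos.le (hm x).le) (Finset.sum_nonneg fun y _ => ?_)
        refine mul_nonneg (hb0 x y) ?_
        rw [hr]
        have := haanti (Nat.zero_le (graphDist b x₀ y))
        linarith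
      have hneg : lam * a 0 ≤ 0 :=
        (mul_nonpos_iff.mpr (Or.inr ⟨hlam.le, (hapos _).le⟩))
      rw [hlap]; exact hneg.trans hpos
    · -- distance r + 1
      have hΔ : a (r + 1) - a r ≤ 0 := by
        have := haanti (Nat.le_succ r); linarith
      have hsum : ∑ y ∈ (hlf x).toFinset,
            (if graphDist b x₀ y + 1 = graphDist b x₀ x then b x y else 0)
              * (a (r + 1) - a r)
          ≤ ∑ y ∈ (hlf x).toFinset,
            b x y * (a (graphDist b x₀ x) - a (graphDist b x₀ y)) := by
        refine Finset.sum_le_sum fun y hy => ?_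
        have hby : 0 < b x y := (hlf x).mem_toFinset.mp hy
        by_cases hcond : graphDist b x₀ y + 1 = graphDist b x₀ x
        · rw [if_pos hcond, hr]
          have : graphDist b x₀ y = r := by omega
          rw [this]
        · rw [if_neg hcond]
          have hge : graphDist b x₀ x ≤ graphDist b x₀ y + 1 :=
            graphDist_le_succ b x₀ hconn (by rw [hsym]; exact hby)
          have : r + 1 ≤ graphDist b x₀ y := by omega
          have h2 : a (graphDist b x₀ y) ≤ a (r + 1) := haanti this
          rw [hr]
          nlinarith [hby, h2]
      have hDub : degMinus b m x₀ x ≤ D (r + 1) :=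
        (hD (r + 1) (by omega)).2 ⟨x, hr, rfl⟩
      have hfact : (1 / m x) * ∑ y ∈ (hlf x).toFinset,
            (if graphDist b x₀ y + 1 = graphDist b x₀ x then b x y else 0)
              * (a (r + 1) - a r)
          = degMinus b m x₀ x * (a (r + 1) - a r) := by
        rw [← Finset.sum_mul, hdegM x]
        ring
      have hstep : D (r + 1) * (a (r + 1) - a r)
          ≤ degMinus b m x₀ x * (a (r + 1) - a r) :=
        mul_le_mul_of_nonpos_right hDub hΔ
      have hval : D (r + 1) * (a (r + 1) - a r) = lam * a (r + 1) := by
        have h2 : a (r + 1) - a r = -(a (r + 1) * g r) := by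
          have := hkey r; linarith
        rw [h2, hgdef]
        have : D (r + 1) ≠ 0 := (hDpos r).ne'
        field_simp
      rw [hlap, hr]
      rw [hr] at hfact hsum
      calc lam * a (r + 1) = D (r + 1) * (a (r + 1) - a r) := hval.symm
        _ ≤ degMinus b m x₀ x * (a (r + 1) - a r) := hstep
        _ = (1 / m x) * ∑ y ∈ (hlf x).toFinset,
              (if graphDist b x₀ y + 1 = r + 1 then b x y else 0)
                * (a (r + 1) - a r) := hfact.symm
        _ ≤ (1 / m x) * ∑ y ∈ (hlf x).toFinset,
              b x y * (a (r + 1) - a (graphDist b x₀ y)) :=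
            mul_le_mul_of_nonneg_left hsum (div_nonneg one_pos.le (hm x).le)
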